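/- arXiv:2507.13613 — 2 statements merged into one kernel-verified Lean document; each statement's English description precedes it below -/
import Mathlib

section
/- Let (s⁽¹⁾, …, s⁽ᴺ⁺¹⁾) be exchangeable real-valued random variables. Fix α ∈ (0,1) and let j_α = ⌈(N+1)(1-α)⌉ with j_α ≤ N. Then Pr[ s⁽ᴺ⁺¹⁾ ≤ s_{(j_α)} ] ≥ 1 - α, where s_{(j_α)} denotes the j_α-th smallest value among s⁽¹⁾, …, s⁽ᴺ⁾. -/
open MeasureTheory Set
open scoped ENNReal NNReal

/-- The `j`-th smallest value (1-indexed) of a list of reals. -/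
noncomputable def orderStat (l : List ℝ) (j : ℕ) : ℝ :=
  (l.insertionSort (· ≤ ·)).getD (j - 1) 0

lemma sorted_getD_iff : ∀ (m : List ℝ), m.Pairwise (· ≤ ·) → ∀ (j : ℕ), 1 ≤ j → j ≤ m.length →
    ∀ t : ℝ, (t ≤ m.getD (j-1) 0 ↔ m.countP (fun a => decide (a < t)) < j) := by
  intro m
  induction m with
  | nil => intro _ j h1 h2; simp at h2; omega
  | cons a m ih =>
    intro hs j h1 h2 t
    have hs' : m.Pairwise (· ≤ ·) := hs.of_cons
    have ha : ∀ b ∈ m, a ≤ b := fun b hb => (List.pairwise_cons.1 hs).1 b hb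
    rw [List.countP_cons]
    rcases Nat.eq_or_lt_of_le h1 with h | h
    · subst h
      simp only [Nat.sub_self, List.getD_cons_zero]
      constructor
      · intro hta
        have : List.countP (fun a => decide (a < t)) m = 0 := by
          rw [List.countP_eq_zero]
          intro b hb
          simp only [decide_eq_true_eq, not_lt]
          exact le_trans hta (ha b hb)
        simp [this, not_lt.2 hta]
      · intro h
        by_contra hc
        push_neg at hc
        simp [hc] at h
    · obtain ⟨j', rfl⟩ : ∃ j', j = j' + 1 := ⟨j - 1, by omega⟩
      have hj'1 : 1 ≤ j' := by omega
      have hj'm : j' ≤ m.length := by simp at h2; omega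
      have hget : (a :: m).getD (j' + 1 - 1) 0 = m.getD (j' - 1) 0 := by
        have : j' + 1 - 1 = (j' - 1) + 1 := by omega
        rw [this]; rfl
      rw [hget]
      by_cases hat : a < t
      · have hif : (if decide (a < t) = true then 1 else 0) = 1 := by simp [hat]
        rw [hif, ih hs' j' hj'1 hj'm t]
        omega
      · have hta : t ≤ a := not_lt.1 hat
        have hcount : List.countP (fun a => decide (a < t)) m = 0 := by
          rw [List.countP_eq_zero]
          intro b hb
          simp only [decide_eq_true_eq, not_lt]
          exact le_trans hta (ha b hb)
        have hgd : t ≤ m.getD (j' - 1) 0 := by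
          rcases lt_or_ge (j' - 1) m.length with hl | hl
          · rw [List.getD_eq_getElem _ _ hl]
            exact le_trans hta (ha _ (List.getElem_mem hl))
          · omega
        exact iff_of_true hgd (by simp [hat, hcount])

lemma countP_ofFn_eq (n : ℕ) (f : Fin n → ℝ) (t : ℝ) :
    (List.ofFn f).countP (fun a => decide (a < t)) = (Finset.univ.filter fun i => f i < t).card := by
  induction n with
  | zero => simp
  | succ n ih =>
    rw [List.ofFn_succ, List.countP_cons, ih (fun i => f i.succ),
      Fin.card_filter_univ_succ (p := fun i => f i < t)]
    by_cases h : f 0 < t <;> simp [h, add_comm]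

lemma card_good (n : ℕ) (x : Fin n → ℝ) (j : ℕ) (hj : j ≤ n) :
    j ≤ (Finset.univ.filter fun k => (Finset.univ.filter fun i => x i < x k).card < j).card := by
  set G := Finset.univ.filter fun k => (Finset.univ.filter fun i => x i < x k).card < j with hG
  set B := Finset.univ.filter fun k => ¬ ((Finset.univ.filter fun i => x i < x k).card < j) with hB
  rcases B.eq_empty_or_nonempty with hBe | hBne
  · have : G = Finset.univ := by
      ext k
      simp only [hG, Finset.mem_filter, Finset.mem_univ, true_and, iff_true]
      by_contra hc
      have : k ∈ B := by simp only [hB, Finset.mem_filter, Finset.mem_univ, true_and]; exact hc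
      simp [hBe] at this
    rw [this, Finset.card_univ, Fintype.card_fin]; exact hj
  · obtain ⟨k₀, hk₀B, hk₀min⟩ := B.exists_min_image x hBne
    have hk₀ : j ≤ (Finset.univ.filter fun i => x i < x k₀).card := by
      simp only [hB, Finset.mem_filter] at hk₀B
      omega
    refine le_trans hk₀ (Finset.card_le_card ?_)
    intro i hi
    simp only [Finset.mem_filter, Finset.mem_univ, true_and] at hi
    simp only [hG, Finset.mem_filter, Finset.mem_univ, true_and]
    by_contra hc
    have hiB : i ∈ B := by simp only [hB, Finset.mem_filter, Finset.mem_univ, true_and]; exact hc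
    exact absurd hi (not_lt.2 (hk₀min i hiB))

lemma card_filter_perm {n : ℕ} (σ : Equiv.Perm (Fin n)) (p : Fin n → Prop) [DecidablePred p] :
    (Finset.univ.filter fun i => p (σ i)).card = (Finset.univ.filter p).card := by
  apply Finset.card_bij (fun i _ => σ i)
  · intro a ha; simp only [Finset.mem_filter, Finset.mem_univ, true_and] at ha ⊢; exact ha
  · intro a _ b _ h; exact σ.injective h
  · intro b hb
    refine ⟨σ.symm b, ?_, by simp⟩
    simp only [Finset.mem_filter, Finset.mem_univ, true_and] at hb ⊢
    simpa using hb

lemma key_iff (N : ℕ) (jα : ℕ) (h1 : 1 ≤ jα) (hjN : jα ≤ N) (x : Fin (N+1) → ℝ) :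
    (x (Fin.last N) ≤ orderStat (List.ofFn fun i : Fin N => x i.castSucc) jα ↔
      (Finset.univ.filter fun i : Fin (N+1) => x i < x (Fin.last N)).card < jα) := by
  set t := x (Fin.last N)
  set l := List.ofFn fun i : Fin N => x i.castSucc with hl
  set m := l.insertionSort (· ≤ ·) with hm
  have hms : m.Pairwise (· ≤ ·) := List.pairwise_insertionSort _ l
  have hlen : m.length = N := by simp [hm, hl, List.length_insertionSort]
  have h1' := sorted_getD_iff m hms jα h1 (by omega) t
  have hcp : m.countP (fun a => decide (a < t)) = l.countP (fun a => decide (a < t)) :=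
    (List.perm_insertionSort _ l).countP_eq _
  have hcp2 := countP_ofFn_eq N (fun i : Fin N => x i.castSucc) t
  have hcard : (Finset.univ.filter fun i : Fin N => x i.castSucc < t).card =
      (Finset.univ.filter fun i : Fin (N+1) => x i < t).card := by
    apply Finset.card_bij (fun (i : Fin N) _ => i.castSucc)
    · intro a ha; simp only [Finset.mem_filter, Finset.mem_univ, true_and] at ha ⊢; exact ha
    · intro a _ b _ h; exact Fin.castSucc_injective N h
    · intro b hb
      simp only [Finset.mem_filter, Finset.mem_univ, true_and] at hb
      have hbne : b ≠ Fin.last N := by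
        intro h; rw [h] at hb; exact lt_irrefl _ hb
      obtain ⟨i, rfl⟩ := Fin.exists_castSucc_eq.2 hbne
      exact ⟨i, by simp only [Finset.mem_filter, Finset.mem_univ, true_and]; exact hb, rfl⟩
  unfold orderStat
  exact h1'.trans (by rw [hcp, hcp2, hcard])

/-- Split conformal prediction coverage lemma under exchangeability. -/
theorem conformal_coverage_exchangeable
    {Ω : Type*} [MeasurableSpace Ω] (μ : Measure Ω) [IsProbabilityMeasure μ]
    (N : ℕ) (hN : 0 < N) (s : Fin (N + 1) → Ω → ℝ)
    (hmeas : ∀ i, Measurable (s i))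
    (hexch : ∀ σ : Equiv.Perm (Fin (N + 1)),
      Measure.map (fun ω => fun i => s (σ i) ω) μ =
        Measure.map (fun ω => fun i => s i ω) μ)
    (α : ℝ) (hα : α ∈ Set.Ioo (0:ℝ) 1)
    (jα : ℕ) (hjα : jα = ⌈((N : ℝ) + 1) * (1 - α)⌉₊) (hjN : jα ≤ N) :
    ENNReal.ofReal (1 - α) ≤
      μ {ω | s (Fin.last N) ω ≤
        orderStat (List.ofFn (fun i : Fin N => s i.castSucc ω)) jα} := by
  have hα1 : (0:ℝ) < 1 - α := by linarith [hα.2]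
  have hjα1 : 1 ≤ jα := by
    rw [hjα]
    exact Nat.ceil_pos.2 (mul_pos (by positivity) hα1)
  -- the events
  set E : Fin (N+1) → Set Ω :=
    fun k => {ω | (Finset.univ.filter fun i => s i ω < s k ω).card < jα} with hE
  have hEmeas : ∀ k, MeasurableSet (E k) := by
    intro k
    have h : Measurable fun ω => (Finset.univ.filter fun i => s i ω < s k ω).card := by
      simp only [Finset.card_filter]
      exact Finset.measurable_sum _ fun i _ =>
        Measurable.ite (measurableSet_lt (hmeas i) (hmeas k)) measurable_const measurable_const
    exact h (MeasurableSet.of_discrete (s := Set.Iio jα))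
  -- exchangeability: all events have equal probability
  have hEeq : ∀ k, μ (E k) = μ (E (Fin.last N)) := by
    intro k
    set B : Set (Fin (N+1) → ℝ) :=
      {x | (Finset.univ.filter fun i => x i < x (Fin.last N)).card < jα} with hBdef
    have hB : MeasurableSet B := by
      have h : Measurable fun x : Fin (N+1) → ℝ =>
          (Finset.univ.filter fun i => x i < x (Fin.last N)).card := by
        simp only [Finset.card_filter]
        exact Finset.measurable_sum _ fun i _ =>
          Measurable.ite (measurableSet_lt (measurable_pi_apply i) (measurable_pi_apply _))
            measurable_const measurable_const
      exact h (MeasurableSet.of_discrete (s := Set.Iio jα))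
    have hT : Measurable (fun ω => fun i => s i ω) :=
      measurable_pi_lambda _ hmeas
    have hTσ : Measurable (fun ω => fun i => s (Equiv.swap k (Fin.last N) i) ω) :=
      measurable_pi_lambda _ fun i => hmeas _
    have h1 : μ (E (Fin.last N)) = Measure.map (fun ω => fun i => s i ω) μ B := by
      rw [Measure.map_apply hT hB]
      rfl
    have h2 : μ (E k) = Measure.map (fun ω => fun i => s (Equiv.swap k (Fin.last N) i) ω) μ B := by
      rw [Measure.map_apply hTσ hB]
      have hpre : (fun ω => fun i => s (Equiv.swap k (Fin.last N) i) ω) ⁻¹' B = E k := by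
        ext ω
        simp only [Set.mem_preimage, hBdef, Set.mem_setOf_eq, hE]
        have hc := card_filter_perm (Equiv.swap k (Fin.last N)) (fun i => s i ω < s k ω)
        simp only [Equiv.swap_apply_right] at hc ⊢
        omega
      rw [hpre]
    rw [h1, h2, hexch (Equiv.swap k (Fin.last N))]
  -- pointwise counting bound
  have hpoint : ∀ ω, (jα : ℝ≥0∞) ≤ ∑ k, (E k).indicator (fun _ => (1:ℝ≥0∞)) ω := by
    intro ω
    have hb := card_good (N+1) (fun i => s i ω) jα (by omega)
    have hsum : ∑ k, (E k).indicator (fun _ => (1:ℝ≥0∞)) ω =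
        ((Finset.univ.filter fun k => ω ∈ E k).card : ℝ≥0∞) := by
      rw [Finset.card_filter, Nat.cast_sum]
      refine Finset.sum_congr rfl fun k _ => ?_
      by_cases h : ω ∈ E k <;> simp [Set.indicator_apply, h]
    rw [hsum]
    exact_mod_cast hb
  -- integrate
  have hsum2 : (jα : ℝ≥0∞) ≤ ∑ k, μ (E k) := by
    calc (jα : ℝ≥0∞) = ∫⁻ _, (jα : ℝ≥0∞) ∂μ := by simp
    _ ≤ ∫⁻ ω, ∑ k, (E k).indicator (fun _ => (1:ℝ≥0∞)) ω ∂μ := lintegral_mono hpoint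
    _ = ∑ k, ∫⁻ ω, (E k).indicator (fun _ => (1:ℝ≥0∞)) ω ∂μ :=
        lintegral_finset_sum _ fun k _ =>
          (measurable_const.indicator (hEmeas k))
    _ = ∑ k, μ (E k) := Finset.sum_congr rfl fun k _ => lintegral_indicator_one (hEmeas k)
  have htot : ∑ k, μ (E k) = ((N:ℝ≥0∞)+1) * μ (E (Fin.last N)) := by
    rw [Finset.sum_congr rfl fun k _ => hEeq k, Finset.sum_const, Finset.card_univ,
      Fintype.card_fin, nsmul_eq_mul]
    push_cast
    ring
  -- combine
  have hle : ((N:ℝ≥0∞)+1) * ENNReal.ofReal (1-α) ≤ ((N:ℝ≥0∞)+1) * μ (E (Fin.last N)) := by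
    rw [← htot]
    refine le_trans ?_ hsum2
    have hceil : ((N:ℝ)+1)*(1-α) ≤ (jα : ℝ) := by
      rw [hjα]; exact Nat.le_ceil _
    calc ((N:ℝ≥0∞)+1) * ENNReal.ofReal (1-α)
        = ENNReal.ofReal (((N:ℝ)+1)*(1-α)) := by
          rw [ENNReal.ofReal_mul (by positivity)]
          congr 1
          rw [ENNReal.ofReal_add (by positivity) zero_le_one, ENNReal.ofReal_natCast,
            ENNReal.ofReal_one]
    _ ≤ ENNReal.ofReal (jα : ℝ) := ENNReal.ofReal_le_ofReal hceil
    _ = (jα : ℝ≥0∞) := ENNReal.ofReal_natCast _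
  have hfinal : ENNReal.ofReal (1-α) ≤ μ (E (Fin.last N)) := by
    have hne : ((N:ℝ≥0∞)+1) ≠ 0 := by simp
    have hnetop : ((N:ℝ≥0∞)+1) ≠ ⊤ := by
      simp [ENNReal.natCast_ne_top]
    exact (ENNReal.mul_le_mul_iff_right hne hnetop).1 hle
  have hset : {ω | s (Fin.last N) ω ≤
      orderStat (List.ofFn (fun i : Fin N => s i.castSucc ω)) jα} = E (Fin.last N) := by
    ext ω
    simp only [Set.mem_setOf_eq, hE]
    exact key_iff N jα hjα1 hjN (fun i => s i ω)
  rw [hset]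
  exact hfinal
end

section
/- Let (s⁽¹⁾, …, s⁽ᴺ⁺¹⁾) be i.i.d. real-valued random variables with continuous distribution, α ∈ (0,1), and j_α = ⌈(N+1)(1-α)⌉ ≤ N. Then Pr[ s⁽ᴺ⁺¹⁾ ≤ s_{(j_α)} ] = j_α/(N+1), which lies in [1-α, 1-α+1/(N+1)). -/
open MeasureTheory Set ProbabilityTheory

lemma le_orderStat_iff (l : List ℝ) (a : ℝ) (j : ℕ) (h1 : 1 ≤ j) (h2 : j ≤ l.length) :
    a ≤ orderStat l j ↔ l.countP (fun b => decide (b < a)) < j := by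
  set m := l.insertionSort (· ≤ ·) with hm
  have hlen : m.length = l.length := List.length_insertionSort _ _
  have hsort : m.Pairwise (· ≤ ·) := List.pairwise_insertionSort _ l
  have hperm : l.countP (fun b => decide (b < a)) = m.countP (fun b => decide (b < a)) :=
    ((List.perm_insertionSort _ l).countP_eq _).symm
  have hj1 : j - 1 < m.length := by omega
  have hOS : orderStat l j = m.get ⟨j - 1, hj1⟩ := by
    rw [orderStat, ← hm, List.getD_eq_getElem (hn := hj1)]; rfl
  rw [hOS, hperm]
  constructor
  · intro h
    have hsplit : m.countP (fun b => decide (b < a)) =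
        (m.take (j-1)).countP (fun b => decide (b < a)) +
        (m.drop (j-1)).countP (fun b => decide (b < a)) := by
      conv_lhs => rw [← List.take_append_drop (j-1) m]
      rw [List.countP_append]
    have hdrop : (m.drop (j-1)).countP (fun b => decide (b < a)) = 0 := by
      rw [List.countP_eq_zero]
      intro b hb
      obtain ⟨i, hi, rfl⟩ := List.mem_iff_getElem.1 hb
      rw [List.getElem_drop]
      simp only [decide_eq_true_eq, not_lt]
      refine le_trans h ?_
      have : (j-1) ≤ (j-1) + i := Nat.le_add_right _ _
      exact hsort.rel_get_of_le (a := ⟨j-1, hj1⟩)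
        (b := ⟨(j-1)+i, by have := (List.length_drop (i := j-1) (l := m)) ▸ hi; omega⟩) this
    have htake : (m.take (j-1)).countP (fun b => decide (b < a)) ≤ j - 1 :=
      le_trans List.countP_le_length (by simp [List.length_take])
    omega
  · intro h
    by_contra hc
    push_neg at hc
    have hex : ∃ b ∈ m.take j, ¬ (decide (b < a) = true) := by
      by_contra hall
      push_neg at hall
      have := List.countP_eq_length.2 hall
      have hle : (m.take j).countP (fun b => decide (b < a)) ≤
          m.countP (fun b => decide (b < a)) := (List.take_sublist _ _).countP_le
      rw [this] at hle
      rw [List.length_take] at hle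
      omega
    obtain ⟨b, hb, hnb⟩ := hex
    obtain ⟨i, hi, rfl⟩ := List.mem_iff_getElem.1 hb
    simp only [decide_eq_true_eq, not_lt] at hnb
    rw [List.getElem_take] at hnb
    have hij : i ≤ j - 1 := by
      rw [List.length_take] at hi; omega
    have : m.get ⟨i, by rw [List.length_take] at hi; omega⟩ ≤ m.get ⟨j-1, hj1⟩ :=
      hsort.rel_get_of_le hij
    exact absurd (le_trans hnb this) (not_le.2 hc)

lemma countP_ofFn {n : ℕ} (g : Fin n → ℝ) (p : ℝ → Bool) :
    (List.ofFn g).countP p = ∑ i : Fin n, if p (g i) then 1 else 0 := by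
  rw [List.ofFn_eq_map, List.countP_map, ← Finset.card_filter]
  rw [List.countP_eq_length_filter]
  rw [← List.toFinset_card_of_nodup ((List.nodup_finRange n).filter _)]
  congr 1
  ext i
  simp [List.mem_filter, Function.comp]

/-- The number of coordinates strictly below coordinate `i`. -/
noncomputable def rnk {n : ℕ} (x : Fin n → ℝ) (i : Fin n) : ℕ :=
  ∑ j, if x j < x i then 1 else 0

lemma rnk_measurable {n : ℕ} (i : Fin n) : Measurable (fun x : Fin n → ℝ => rnk x i) := by
  unfold rnk
  refine Finset.measurable_sum _ fun j _ => Measurable.ite ?_ measurable_const measurable_const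
  exact measurableSet_lt (measurable_pi_apply j) (measurable_pi_apply i)

lemma rnk_lt {n : ℕ} (x : Fin (n+1) → ℝ) (i : Fin (n+1)) : rnk x i < n + 1 := by
  classical
  have h : rnk x i = ∑ j ∈ Finset.univ.erase i, if x j < x i then 1 else 0 := by
    rw [rnk, ← Finset.add_sum_erase _ _ (Finset.mem_univ i)]
    simp
  rw [h]
  calc (∑ j ∈ Finset.univ.erase i, if x j < x i then 1 else 0)
      ≤ ∑ _j ∈ Finset.univ.erase i, 1 := Finset.sum_le_sum (by intro j _; split <;> omega)
    _ = n := by simp [Finset.card_erase_of_mem]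
    _ < n + 1 := Nat.lt_succ_self n

lemma rnk_inj {n : ℕ} (x : Fin (n+1) → ℝ) (hx : Function.Injective x) :
    Function.Injective (fun i => rnk x i) := by
  classical
  have key : ∀ i i' : Fin (n+1), x i < x i' → rnk x i < rnk x i' := by
    intro i i' hlt
    refine Finset.sum_lt_sum (fun j _ => ?_) ⟨i, Finset.mem_univ i, ?_⟩
    · split_ifs with h1 h2 <;> first | rfl | omega | exact absurd (h1.trans hlt) h2
    · simp [hlt, lt_irrefl]
  intro i i' h
  by_contra hne
  rcases lt_or_gt_of_ne (fun he => hne (hx he)) with hl | hl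
  · exact absurd h (Nat.ne_of_lt (key _ _ hl))
  · exact absurd h.symm (Nat.ne_of_lt (key _ _ hl))

lemma card_rnk_lt {n : ℕ} (x : Fin (n+1) → ℝ) (hx : Function.Injective x)
    (t : ℕ) (ht : t ≤ n) :
    (Finset.univ.filter (fun i => rnk x i < t)).card = t := by
  classical
  set g : Fin (n+1) → Fin (n+1) := fun i => ⟨rnk x i, rnk_lt x i⟩ with hg
  have hginj : Function.Injective g := by
    intro a b hab
    exact rnk_inj x hx (congrArg Fin.val hab)
  have hgbij : Function.Bijective g := (Finite.injective_iff_bijective).1 hginj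
  have h1 : (Finset.univ.filter (fun i => rnk x i < t)).card
      = (Finset.univ.filter (fun k : Fin (n+1) => (k : ℕ) < t)).card := by
    refine Finset.card_bij (fun i _ => g i) ?_ ?_ ?_
    · intro i hi
      simp only [Finset.mem_filter, Finset.mem_univ, true_and] at hi ⊢; exact hi
    · intro a _ b _ hab; exact hginj hab
    · intro k hk
      obtain ⟨i, rfl⟩ := hgbij.2 k
      simp only [Finset.mem_filter, Finset.mem_univ, true_and] at hk ⊢
      exact ⟨i, by simpa using hk, rfl⟩
  have h2 : (Finset.univ.filter (fun k : Fin (n+1) => (k : ℕ) < t)).card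
      = (Finset.Iio (⟨t, by omega⟩ : Fin (n+1))).card := by
    congr 1
    ext k
    simp [Finset.mem_Iio, Fin.lt_def]
  rw [h1, h2, Fin.card_Iio]

lemma map_eq_pi {Ω : Type*} [MeasurableSpace Ω] (μ : Measure Ω) [IsProbabilityMeasure μ]
    (n : ℕ) (s : Fin (n+1) → Ω → ℝ)
    (hmeas : ∀ i, Measurable (s i))
    (hindep : iIndepFun s μ)
    (ν : Measure ℝ) (hident : ∀ i, Measure.map (s i) μ = ν) :
    Measure.map (fun ω i => s i ω) μ = Measure.pi (fun _ : Fin (n+1) => ν) := by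
  have hν : IsProbabilityMeasure ν := by
    rw [← hident 0]
    exact Measure.isProbabilityMeasure_map (hmeas 0).aemeasurable
  symm
  refine Measure.pi_eq fun A hA => ?_
  rw [Measure.map_apply (measurable_pi_iff.2 hmeas) (MeasurableSet.univ_pi hA)]
  have hpre : (fun ω i => s i ω) ⁻¹' (Set.pi univ A) = ⋂ i, s i ⁻¹' A i := by
    ext ω; simp [Set.mem_pi]
  rw [hpre]
  have := hindep.meas_iInter (s := fun i => s i ⁻¹' A i) (fun i => ⟨A i, hA i, rfl⟩)
  rw [this]
  exact Finset.prod_congr rfl fun i _ => by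
    rw [← hident i, Measure.map_apply (hmeas i) (hA i)]

lemma ties_null {Ω : Type*} [MeasurableSpace Ω] (μ : Measure Ω) [IsProbabilityMeasure μ]
    {ι : Type*} (s : ι → Ω → ℝ)
    (hmeas : ∀ i, Measurable (s i))
    (hindep : iIndepFun s μ)
    (ν : Measure ℝ) (hident : ∀ i, Measure.map (s i) μ = ν)
    (hcont : ∀ x : ℝ, ν {x} = 0) (i j : ι) (hij : i ≠ j) :
    μ {ω | s i ω = s j ω} = 0 := by
  have hdiag : MeasurableSet {p : ℝ × ℝ | p.1 = p.2} :=
    measurableSet_eq_fun measurable_fst measurable_snd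
  have hind : IndepFun (s i) (s j) μ := hindep.indepFun hij
  have hmap : Measure.map (fun ω => (s i ω, s j ω)) μ = (μ.map (s i)).prod (μ.map (s j)) :=
    (indepFun_iff_map_prod_eq_prod_map_map (hmeas i).aemeasurable (hmeas j).aemeasurable).1 hind
  have hrw : {ω | s i ω = s j ω} = (fun ω => (s i ω, s j ω)) ⁻¹' {p : ℝ × ℝ | p.1 = p.2} := rfl
  rw [hrw, ← Measure.map_apply ((hmeas i).prodMk (hmeas j)) hdiag, hmap, hident i, hident j]
  have : IsProbabilityMeasure ν := by
    rw [← hident i]; exact Measure.isProbabilityMeasure_map (hmeas i).aemeasurable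
  rw [Measure.prod_apply hdiag]
  have hz : ∀ x : ℝ, ν (Prod.mk x ⁻¹' {p : ℝ × ℝ | p.1 = p.2}) = 0 := by
    intro x
    have : Prod.mk x ⁻¹' {p : ℝ × ℝ | p.1 = p.2} = {x} := by
      ext y; simp [eq_comm]
    rw [this]; exact hcont x
  rw [show (fun x => ν (Prod.mk x ⁻¹' {p : ℝ × ℝ | p.1 = p.2})) = fun _ => 0 from funext hz]
  simp

lemma perm_preserving {n : ℕ} (ν : Measure ℝ) [IsProbabilityMeasure ν]
    (e : Fin n ≃ Fin n) :
    MeasurePreserving (fun (x : Fin n → ℝ) i => x (e i))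
      (Measure.pi fun _ => ν) (Measure.pi fun _ => ν) := by
  have h := measurePreserving_piCongrLeft (fun _ : Fin n => ν) e.symm
  have hco : ⇑(MeasurableEquiv.piCongrLeft (fun _ : Fin n => ℝ) e.symm)
      = fun (x : Fin n → ℝ) i => x (e i) := by
    rw [MeasurableEquiv.coe_piCongrLeft]
    ext x i
    conv_lhs => rw [show i = e.symm (e i) from (Equiv.symm_apply_apply e i).symm]
    rw [Equiv.piCongrLeft_apply_apply]
  rwa [hco] at h

lemma symm_meas {n : ℕ} (ν : Measure ℝ) [IsProbabilityMeasure ν] (t : ℕ) (i i' : Fin (n+1)) :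
    Measure.pi (fun _ : Fin (n+1) => ν) {x | rnk x i < t}
      = Measure.pi (fun _ : Fin (n+1) => ν) {x | rnk x i' < t} := by
  set e := Equiv.swap i i'
  have hmp := perm_preserving ν e
  have hms : MeasurableSet {x : Fin (n+1) → ℝ | rnk x i' < t} :=
    measurableSet_lt (rnk_measurable i') measurable_const
  have hkey := hmp.measure_preimage hms.nullMeasurableSet
  have hpre : (fun (x : Fin (n+1) → ℝ) k => x (e k)) ⁻¹' {x | rnk x i' < t}
      = {x | rnk x i < t} := by
    ext x
    simp only [Set.mem_preimage, Set.mem_setOf_eq]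
    have : rnk (fun k => x (e k)) i' = rnk x i := by
      show (∑ j, if x (e j) < x (e i') then 1 else 0) = ∑ j, if x j < x i then 1 else 0
      rw [show x (e i') = x i by simp [e, Equiv.swap_apply_right]]
      exact Fintype.sum_equiv e _ _ (fun j => rfl)
    rw [this]
  rw [hpre] at hkey
  exact hkey

/-- Exact conformal coverage for i.i.d. samples with continuous (atomless) distribution. -/
theorem conformal_coverage_iid_exact
    {Ω : Type*} [MeasurableSpace Ω] (μ : Measure Ω) [IsProbabilityMeasure μ]
    (N : ℕ) (hN : 0 < N) (s : Fin (N + 1) → Ω → ℝ)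
    (hmeas : ∀ i, Measurable (s i))
    (hindep : iIndepFun s μ)
    (ν : Measure ℝ) (hident : ∀ i, Measure.map (s i) μ = ν)
    (hcont : ∀ x : ℝ, ν {x} = 0)
    (α : ℝ) (hα : α ∈ Set.Ioo (0:ℝ) 1)
    (jα : ℕ) (hjα : jα = ⌈((N : ℝ) + 1) * (1 - α)⌉₊) (hjN : jα ≤ N) :
    μ {ω | s (Fin.last N) ω ≤
        orderStat (List.ofFn (fun i : Fin N => s i.castSucc ω)) jα}
      = ENNReal.ofReal ((jα : ℝ) / (N + 1)) ∧
    (1 - α ≤ (jα : ℝ) / (N + 1) ∧ (jα : ℝ) / (N + 1) < 1 - α + 1 / (N + 1)) := by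
  obtain ⟨hα0, hα1⟩ := hα
  have hNpos : (0:ℝ) < (N:ℝ) + 1 := by positivity
  have hcpos : (0:ℝ) < ((N:ℝ) + 1) * (1 - α) := by
    have : 0 < 1 - α := by linarith
    positivity
  have hj1 : 1 ≤ jα := by
    rw [hjα]
    exact Nat.ceil_pos.2 hcpos
  -- numeric part
  have hnum1 : 1 - α ≤ (jα : ℝ) / (N + 1) := by
    rw [le_div_iff₀ hNpos]
    rw [hjα]
    calc (1 - α) * ((N:ℝ) + 1) = ((N:ℝ) + 1) * (1 - α) := by ring
    _ ≤ (⌈((N : ℝ) + 1) * (1 - α)⌉₊ : ℝ) := Nat.le_ceil _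
  have hnum2 : (jα : ℝ) / (N + 1) < 1 - α + 1 / (N + 1) := by
    rw [div_lt_iff₀ hNpos]
    have hce : (jα : ℝ) < ((N : ℝ) + 1) * (1 - α) + 1 := by
      rw [hjα]
      exact Nat.ceil_lt_add_one hcpos.le
    calc (jα : ℝ) < ((N : ℝ) + 1) * (1 - α) + 1 := hce
    _ = (1 - α + 1 / ((N:ℝ) + 1)) * ((N:ℝ) + 1) := by
        field_simp
  refine ⟨?_, hnum1, hnum2⟩
  -- main part
  have hν : IsProbabilityMeasure ν := by
    rw [← hident 0]
    exact Measure.isProbabilityMeasure_map (hmeas 0).aemeasurable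
  set π := Measure.pi (fun _ : Fin (N+1) => ν) with hπ
  haveI : IsProbabilityMeasure π := by
    constructor
    simp [hπ, Measure.pi_univ]
  have hS : Measurable (fun ω (i : Fin (N+1)) => s i ω) := measurable_pi_iff.2 hmeas
  have hsmap : Measure.map (fun ω i => s i ω) μ = π := map_eq_pi μ N s hmeas hindep ν hident
  -- rewrite the event
  have hev : {ω | s (Fin.last N) ω ≤
        orderStat (List.ofFn (fun i : Fin N => s i.castSucc ω)) jα}
      = (fun ω i => s i ω) ⁻¹' {x : Fin (N+1) → ℝ | rnk x (Fin.last N) < jα} := by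
    ext ω
    simp only [Set.mem_setOf_eq, Set.mem_preimage]
    rw [le_orderStat_iff _ _ _ hj1 (by simp [List.length_ofFn, hjN])]
    rw [countP_ofFn]
    have : rnk (fun i => s i ω) (Fin.last N)
        = ∑ i : Fin N, if s i.castSucc ω < s (Fin.last N) ω then 1 else 0 := by
      rw [rnk, Fin.sum_univ_castSucc]
      simp
    rw [this]
    simp
  have hFmeas : ∀ i : Fin (N+1), MeasurableSet {x : Fin (N+1) → ℝ | rnk x i < jα} :=
    fun i => measurableSet_lt (rnk_measurable i) measurable_const
  rw [hev, ← Measure.map_apply hS (hFmeas _), hsmap]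
  -- the tie set is null
  have hties : π {x : Fin (N+1) → ℝ | ¬ Function.Injective x} = 0 := by
    have hsub : {x : Fin (N+1) → ℝ | ¬ Function.Injective x}
        ⊆ ⋃ (i : Fin (N+1)) (j : Fin (N+1)) (_ : i ≠ j), {x | x i = x j} := by
      intro x hx
      simp only [Function.Injective, not_forall] at hx
      obtain ⟨i, j, hxe, hne⟩ := hx
      exact Set.mem_iUnion.2 ⟨i, Set.mem_iUnion.2 ⟨j, Set.mem_iUnion.2 ⟨hne, hxe⟩⟩⟩
    refine measure_mono_null hsub ?_
    refine measure_iUnion_null fun i => measure_iUnion_null fun j => measure_iUnion_null fun hij => ?_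
    have hms : MeasurableSet {x : Fin (N+1) → ℝ | x i = x j} :=
      measurableSet_eq_fun (measurable_pi_apply i) (measurable_pi_apply j)
    rw [← hsmap, Measure.map_apply hS hms]
    exact ties_null μ s hmeas hindep ν hident hcont i j hij
  -- sum over coordinates
  have hind_sum : ∀ᵐ x ∂π, (∑ i : Fin (N+1),
      ({x : Fin (N+1) → ℝ | rnk x i < jα}).indicator (fun _ => (1:ENNReal)) x)
      = (jα : ENNReal) := by
    rw [ae_iff]
    refine measure_mono_null ?_ hties
    intro x hx
    simp only [Set.mem_setOf_eq] at hx ⊢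
    intro hinj
    apply hx
    classical
    have : (∑ i : Fin (N+1),
        ({x : Fin (N+1) → ℝ | rnk x i < jα}).indicator (fun _ => (1:ENNReal)) x)
        = ∑ i : Fin (N+1), if rnk x i < jα then (1:ENNReal) else 0 := by
      refine Finset.sum_congr rfl fun i _ => ?_
      simp [Set.indicator_apply]
    rw [this, Finset.sum_boole, card_rnk_lt x hinj jα hjN]
  have hsum_eq : ∑ i : Fin (N+1), π {x : Fin (N+1) → ℝ | rnk x i < jα} = (jα : ENNReal) := by
    have h1 : ∀ i : Fin (N+1), π {x : Fin (N+1) → ℝ | rnk x i < jα}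
        = ∫⁻ x, ({x : Fin (N+1) → ℝ | rnk x i < jα}).indicator (fun _ => (1:ENNReal)) x ∂π := by
      intro i
      exact (lintegral_indicator_one (hFmeas i)).symm
    calc ∑ i : Fin (N+1), π {x : Fin (N+1) → ℝ | rnk x i < jα}
        = ∑ i : Fin (N+1), ∫⁻ x, ({x : Fin (N+1) → ℝ | rnk x i < jα}).indicator
            (fun _ => (1:ENNReal)) x ∂π := Finset.sum_congr rfl fun i _ => h1 i
      _ = ∫⁻ x, (∑ i : Fin (N+1), ({x : Fin (N+1) → ℝ | rnk x i < jα}).indicator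
            (fun _ => (1:ENNReal)) x) ∂π := by
          rw [lintegral_finset_sum]
          intro i _
          exact (measurable_const.indicator (hFmeas i))
      _ = ∫⁻ _, (jα : ENNReal) ∂π := lintegral_congr_ae hind_sum
      _ = (jα : ENNReal) := by simp
  have hall_eq : ∀ i : Fin (N+1), π {x : Fin (N+1) → ℝ | rnk x i < jα}
      = π {x : Fin (N+1) → ℝ | rnk x (Fin.last N) < jα} :=
    fun i => symm_meas ν jα i (Fin.last N)
  have hmain : ((N:ENNReal) + 1) * π {x : Fin (N+1) → ℝ | rnk x (Fin.last N) < jα}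
      = (jα : ENNReal) := by
    rw [← hsum_eq]
    rw [Finset.sum_congr rfl fun i _ => hall_eq i]
    simp [Finset.sum_const, mul_comm]
  have hne0 : ((N:ENNReal) + 1) ≠ 0 := by simp
  have hnetop : ((N:ENNReal) + 1) ≠ ⊤ := by simp [ENNReal.add_ne_top]
  have : π {x : Fin (N+1) → ℝ | rnk x (Fin.last N) < jα} = (jα : ENNReal) / ((N:ENNReal) + 1) := by
    rw [ENNReal.eq_div_iff hne0 hnetop, ← hmain]
  rw [this]
  rw [ENNReal.ofReal_div_of_pos hNpos]
  congr 1
  · rw [ENNReal.ofReal_natCast]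
  · rw [show ((N:ℝ) + 1) = ((N + 1 : ℕ) : ℝ) by push_cast; ring, ENNReal.ofReal_natCast]
    push_cast
    ring
end
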